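/- Let V be a finite nonempty type and H a simple graph on V. For every q ∈ ℕ let c_H(q) be the number of functions f : V → Fin q such that f(u) ≠ f(v) whenever u and v are adjacent in H. If P ∈ ℚ[X] is a polynomial satisfying P(q) = c_H(q) for every natural number q, then the derivative of P evaluated at 0 equals Σ(H). -/

import Mathlib

open scoped Classical

/-- `P` is a partition of the (finite) vertex type `V` into nonempty blocks which is
compatible with the graph `H`: no block contains two adjacent vertices. -/
def CompatiblePartition {V : Type} [Fintype V] (H : SimpleGraph V)
    (P : Finset (Finset V)) : Prop :=
  (∀ E ∈ P, E.Nonempty) ∧ (∀ v : V, ∃! E, E ∈ P ∧ v ∈ E) ∧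
    ∀ E ∈ P, ∀ u ∈ E, ∀ v ∈ E, ¬ H.Adj u v

/-- `Σ(H) = ∑_{P compatible} (−1)^{|P|−1} (|P|−1)!`. -/
noncomputable def SigmaH {V : Type} [Fintype V] (H : SimpleGraph V) : ℤ :=
  ∑ P : Finset (Finset V),
    if CompatiblePartition H P then
      (-1 : ℤ) ^ (P.card - 1) * (Nat.factorial (P.card - 1) : ℤ)
    else 0

section Aux

variable {V : Type} [Fintype V] {H : SimpleGraph V}

/-- The partition of `V` into the fibers of a coloring `f`. -/
noncomputable def fiberPart {q : ℕ} (f : V → Fin q) : Finset (Finset V) :=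
  Finset.univ.image (fun v => Finset.univ.filter (fun u => f u = f v))

lemma mem_block_of_mem_fiberPart {q : ℕ} {f : V → Fin q} {E : Finset V} {v : V}
    (hE : E ∈ fiberPart f) (hv : v ∈ E) :
    E = Finset.univ.filter (fun u => f u = f v) := by
  rcases Finset.mem_image.mp hE with ⟨w, -, rfl⟩
  have hv' : f v = f w := (Finset.mem_filter.mp hv).2
  ext u
  simp [hv']

lemma compat_fiberPart {q : ℕ} {f : V → Fin q}
    (hf : ∀ u v : V, H.Adj u v → f u ≠ f v) :
    CompatiblePartition H (fiberPart f) := by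
  refine ⟨?_, ?_, ?_⟩
  · intro E hE
    rcases Finset.mem_image.mp hE with ⟨w, -, rfl⟩
    exact ⟨w, by simp⟩
  · intro v
    refine ⟨Finset.univ.filter (fun u => f u = f v),
      ⟨Finset.mem_image.mpr ⟨v, by simp, rfl⟩, by simp⟩, ?_⟩
    rintro E ⟨hE, hvE⟩
    exact mem_block_of_mem_fiberPart hE hvE
  · intro E hE u hu v hv hadj
    have h1 := mem_block_of_mem_fiberPart hE hu
    have h2 : f v = f u := by
      have := hv; rw [h1, Finset.mem_filter] at this; exact this.2
    exact hf u v hadj h2.symm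

variable {P : Finset (Finset V)} (hP : CompatiblePartition H P)

/-- The block of the partition containing `v`. -/
noncomputable def blk (v : V) : Finset V := (hP.2.1 v).exists.choose

lemma blk_mem (v : V) : blk hP v ∈ P := (hP.2.1 v).exists.choose_spec.1
lemma mem_blk (v : V) : v ∈ blk hP v := (hP.2.1 v).exists.choose_spec.2

lemma blk_eq {E : Finset V} {v : V} (hE : E ∈ P) (hv : v ∈ E) : blk hP v = E :=
  (hP.2.1 v).unique ⟨blk_mem hP v, mem_blk hP v⟩ ⟨hE, hv⟩

/-- A representative of a block. -/
noncomputable def rep (E : {E // E ∈ P}) : V := (hP.1 E.1 E.2).choose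

lemma rep_mem (E : {E // E ∈ P}) : rep hP E ∈ E.1 := (hP.1 E.1 E.2).choose_spec

/-- Proper colorings with fiber partition `P` correspond to injections of the blocks of `P`
into the colors. -/
noncomputable def colorEquiv (q : ℕ) :
    {f : V → Fin q // (∀ u v : V, H.Adj u v → f u ≠ f v) ∧ fiberPart f = P} ≃
      ({E // E ∈ P} ↪ Fin q) where
  toFun f := ⟨fun E => f.1 (rep hP E), by
    intro E₁ E₂ h
    have hE1 : (E₁ : Finset V) ∈ fiberPart f.1 := by rw [f.2.2]; exact E₁.2
    have hE2 : (E₂ : Finset V) ∈ fiberPart f.1 := by rw [f.2.2]; exact E₂.2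
    have h1 : E₁.1 = Finset.univ.filter (fun u => f.1 u = f.1 (rep hP E₁)) :=
      mem_block_of_mem_fiberPart hE1 (rep_mem hP E₁)
    have h2 : E₂.1 = Finset.univ.filter (fun u => f.1 u = f.1 (rep hP E₂)) :=
      mem_block_of_mem_fiberPart hE2 (rep_mem hP E₂)
    have h' : f.1 (rep hP E₁) = f.1 (rep hP E₂) := h
    apply Subtype.ext
    rw [h1, h2, h']⟩
  invFun g := ⟨fun v => g ⟨blk hP v, blk_mem hP v⟩, by
    constructor
    · intro u v hadj huv
      have hb : blk hP u = blk hP v := congrArg Subtype.val (g.injective huv)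
      exact hP.2.2 (blk hP v) (blk_mem hP v) u (hb ▸ mem_blk hP u) v (mem_blk hP v) hadj
    · have key : ∀ v : V, (Finset.univ.filter
          (fun u => g ⟨blk hP u, blk_mem hP u⟩ = g ⟨blk hP v, blk_mem hP v⟩)) = blk hP v := by
        intro v
        ext u
        simp only [Finset.mem_filter, Finset.mem_univ, true_and]
        constructor
        · intro h
          have hb : blk hP u = blk hP v := Subtype.ext_iff.mp (g.injective h)
          exact hb ▸ mem_blk hP u
        · intro h
          have hb : blk hP u = blk hP v := blk_eq hP (blk_mem hP v) h
          exact congrArg g (Subtype.ext hb)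
      ext E
      simp only [fiberPart, Finset.mem_image, Finset.mem_univ, true_and]
      constructor
      · rintro ⟨v, rfl⟩
        rw [key v]; exact blk_mem hP v
      · intro hE
        obtain ⟨v, hv⟩ := hP.1 E hE
        exact ⟨v, (key v).trans (blk_eq hP hE hv)⟩⟩
  left_inv f := by
    apply Subtype.ext
    funext v
    show f.1 (rep hP ⟨blk hP v, blk_mem hP v⟩) = f.1 v
    have hm : blk hP v ∈ fiberPart f.1 := by rw [f.2.2]; exact blk_mem hP v
    have hbv : blk hP v = Finset.univ.filter (fun u => f.1 u = f.1 v) :=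
      mem_block_of_mem_fiberPart hm (mem_blk hP v)
    have h0 : rep hP ⟨blk hP v, blk_mem hP v⟩ ∈ blk hP v := rep_mem hP _
    have h2 : rep hP ⟨blk hP v, blk_mem hP v⟩ ∈
        Finset.univ.filter (fun u => f.1 u = f.1 v) := by
      rw [← hbv]; exact h0
    exact (Finset.mem_filter.mp h2).2
  right_inv g := by
    refine Function.Embedding.ext fun E => ?_
    show g ⟨blk hP (rep hP E), blk_mem hP (rep hP E)⟩ = g E
    exact congrArg g (Subtype.ext (blk_eq hP E.2 (rep_mem hP E)))

/-- The number of proper colorings is the sum over compatible partitions of descending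
factorials. -/
lemma card_colorings (q : ℕ) :
    Nat.card {f : V → Fin q // ∀ u v : V, H.Adj u v → f u ≠ f v}
      = ∑ P : Finset (Finset V),
          if CompatiblePartition H P then q.descFactorial P.card else 0 := by
  classical
  rw [Nat.card_eq_fintype_card, Fintype.card_subtype, ← Finset.sum_filter]
  rw [Finset.card_eq_sum_card_fiberwise (f := fun f => fiberPart f)
    (t := Finset.univ.filter (fun P => CompatiblePartition H P)) ?_]
  · apply Finset.sum_congr rfl
    intro P hPmem
    have hP : CompatiblePartition H P := (Finset.mem_filter.mp hPmem).2
    rw [Finset.filter_filter]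
    have hc : (Finset.univ.filter (fun f : V → Fin q =>
          (∀ u v, H.Adj u v → f u ≠ f v) ∧ fiberPart f = P)).card
        = Fintype.card {f : V → Fin q //
            (∀ u v, H.Adj u v → f u ≠ f v) ∧ fiberPart f = P} :=
      (Fintype.card_subtype _).symm
    rw [hc, Fintype.card_congr (colorEquiv hP q), Fintype.card_embedding_eq,
      Fintype.card_fin, Fintype.card_coe]
  · intro f hf
    simp only [Finset.mem_coe, Finset.mem_filter, Finset.mem_univ, true_and] at hf ⊢
    exact compat_fiberPart hf

end Aux

open Polynomial in
lemma descPochhammer_rat_eval_neg_one (n : ℕ) :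
    (descPochhammer ℚ n).eval (-1) = (-1 : ℚ) ^ n * n.factorial := by
  induction n with
  | zero => simp
  | succ n ih =>
    rw [descPochhammer_succ_right, Polynomial.eval_mul, ih]
    simp only [Polynomial.eval_sub, Polynomial.eval_X, Polynomial.eval_natCast,
      Nat.factorial_succ, pow_succ]
    push_cast
    ring

open Polynomial in
lemma deriv_descPochhammer_eval_zero (k : ℕ) :
    (Polynomial.derivative (descPochhammer ℚ (k + 1))).eval 0
      = (-1 : ℚ) ^ k * k.factorial := by
  rw [descPochhammer_succ_left, Polynomial.derivative_mul, Polynomial.derivative_X]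
  rw [Polynomial.eval_add, Polynomial.eval_mul, Polynomial.eval_mul]
  simp only [Polynomial.eval_X, Polynomial.eval_one, one_mul, zero_mul, add_zero,
    Polynomial.eval_comp, Polynomial.eval_sub, Polynomial.eval_one, Polynomial.eval_X]
  rw [zero_sub, descPochhammer_rat_eval_neg_one]

section Main
variable {V : Type} [Fintype V]

/-- The chromatic polynomial, expressed via compatible partitions. -/
noncomputable def chromPoly (H : SimpleGraph V) : Polynomial ℚ :=
  ∑ P : Finset (Finset V),
    if CompatiblePartition H P then descPochhammer ℚ P.card else 0

lemma chromPoly_eval_nat (H : SimpleGraph V) (q : ℕ) :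
    (chromPoly H).eval (q : ℚ)
      = (Nat.card {f : V → Fin q // ∀ u v : V, H.Adj u v → f u ≠ f v} : ℚ) := by
  rw [card_colorings (H := H) q, chromPoly, Polynomial.eval_finset_sum]
  push_cast
  apply Finset.sum_congr rfl
  intro P _
  by_cases h : CompatiblePartition H P
  · simp [h, descPochhammer_eval_eq_descFactorial]
  · simp [h]

lemma compat_nonempty [Nonempty V] {H : SimpleGraph V} {P : Finset (Finset V)}
    (hP : CompatiblePartition H P) : P.Nonempty := by
  obtain ⟨v⟩ := ‹Nonempty V›
  obtain ⟨E, hE, -⟩ := (hP.2.1 v).exists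
  exact ⟨E, hE⟩

theorem derivative_chromatic_at_zero_eq_sigma' [Nonempty V]
    (H : SimpleGraph V) (P : Polynomial ℚ)
    (hP : ∀ q : ℕ, P.eval (q : ℚ) =
      Nat.card {f : V → Fin q // ∀ u v : V, H.Adj u v → f u ≠ f v}) :
    (Polynomial.derivative P).eval 0 = (SigmaH H : ℚ) := by
  have hPQ : P = chromPoly H := by
    apply Polynomial.eq_of_infinite_eval_eq
    apply (Set.infinite_range_of_injective (Nat.cast_injective (R := ℚ))).mono
    rintro x ⟨q, rfl⟩
    show P.eval (q : ℚ) = (chromPoly H).eval (q : ℚ)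
    rw [hP q, chromPoly_eval_nat]
  rw [hPQ, chromPoly, map_sum, Polynomial.eval_finset_sum]
  have hcast : (SigmaH H : ℚ) = ∑ Q : Finset (Finset V),
      if CompatiblePartition H Q then
        (-1 : ℚ) ^ (Q.card - 1) * ((Q.card - 1).factorial : ℚ)
      else 0 := by
    rw [SigmaH]
    push_cast
    rfl
  rw [hcast]
  apply Finset.sum_congr rfl
  intro Q _
  by_cases h : CompatiblePartition H Q
  · simp only [h, if_true]
    have hcard : Q.card = (Q.card - 1) + 1 :=
      (Nat.succ_pred_eq_of_pos (Finset.card_pos.mpr (compat_nonempty h))).symm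
    rw [hcard, deriv_descPochhammer_eval_zero]
    simp
  · simp [h]

end Main

/-- If `P` is a polynomial whose value at every natural number `q` is the number of proper
colorings of `H` with `q` colors, then `P'(0) = Σ(H)`. -/
theorem derivative_chromatic_at_zero_eq_sigma {V : Type} [Fintype V] [Nonempty V]
    (H : SimpleGraph V) (P : Polynomial ℚ)
    (hP : ∀ q : ℕ, P.eval (q : ℚ) =
      Nat.card {f : V → Fin q // ∀ u v : V, H.Adj u v → f u ≠ f v}) :
    (Polynomial.derivative P).eval 0 = (SigmaH H : ℚ) := by
  exact derivative_chromatic_at_zero_eq_sigma' H P hP
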